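/- Let R = ℂ[x_1,…,x_n] with maximal ideal m_0 = (x_1,…,x_n), let I ⊆ R be an ideal and k ∈ ℕ. Then the truncated dual space D_0^k[I] and the quotient ring R/(I + m_0^{k+1}) have the same (finite) dimension as ℂ-vector spaces: dim_ℂ D_0^k[I] = dim_ℂ R/(I + m_0^{k+1}). -/

import Mathlib

open MvPolynomial

noncomputable section

/-- Apolarity pairing `⟨q, f⟩ = ∑ α (coeff α q) * (coeff α f)`. -/
def apair {n : ℕ} (q f : MvPolynomial (Fin n) ℂ) : ℂ :=
  ∑ α ∈ q.support, q.coeff α * f.coeff α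

lemma apair_eq_sum {n : ℕ} {q : MvPolynomial (Fin n) ℂ} {s : Finset (Fin n →₀ ℕ)}
    (h : q.support ⊆ s) (f : MvPolynomial (Fin n) ℂ) :
    apair q f = ∑ α ∈ s, q.coeff α * f.coeff α :=
  Finset.sum_subset h (fun α _ hα => by
    rw [MvPolynomial.notMem_support_iff.mp hα, zero_mul])

/-- The Macaulay dual space `D_0[I]` of an ideal at the origin. -/
def dualSpace {n : ℕ} (I : Ideal (MvPolynomial (Fin n) ℂ)) :
    Submodule ℂ (MvPolynomial (Fin n) ℂ) where
  carrier := {q | ∀ f ∈ I, apair q f = 0}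
  zero_mem' := by intro f hf; simp [apair]
  add_mem' := by
    intro a b ha hb f hf
    have h : apair (a + b) f = apair a f + apair b f := by
      rw [apair_eq_sum (s := a.support ∪ b.support) MvPolynomial.support_add,
        apair_eq_sum (s := a.support ∪ b.support) Finset.subset_union_left,
        apair_eq_sum (s := a.support ∪ b.support) Finset.subset_union_right,
        ← Finset.sum_add_distrib]
      exact Finset.sum_congr rfl fun α _ => by rw [coeff_add, add_mul]
    rw [h, ha f hf, hb f hf, add_zero]
  smul_mem' := by
    intro c q hq f hf
    have h : apair (c • q) f = c * apair q f := by
      rw [apair_eq_sum (s := q.support) MvPolynomial.support_smul, apair, Finset.mul_sum]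
      exact Finset.sum_congr rfl fun α _ => by rw [coeff_smul, smul_eq_mul, mul_assoc]
    rw [h, hq f hf, mul_zero]

open scoped Classical in
/-- The contraction `g ∘ q`, realizing the action of `g` on differential functionals:
`coeff α (contract g q) = ∑ β, coeff β g * coeff (α + β) q`. -/
def contract {n : ℕ} (g q : MvPolynomial (Fin n) ℂ) : MvPolynomial (Fin n) ℂ :=
  ∑ β ∈ g.support, ∑ α ∈ q.support,
    if β ≤ α then monomial (α - β) (g.coeff β * q.coeff α) else 0

/-- The truncated dual space `D_0^k[I]`. -/
def truncDual {n : ℕ} (k : ℕ) (I : Ideal (MvPolynomial (Fin n) ℂ)) :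
    Submodule ℂ (MvPolynomial (Fin n) ℂ) where
  carrier := {q | q ∈ dualSpace I ∧ q.totalDegree ≤ k}
  zero_mem' := ⟨(dualSpace I).zero_mem, by simp⟩
  add_mem' := fun ha hb => ⟨(dualSpace I).add_mem ha.1 hb.1,
    le_trans (MvPolynomial.totalDegree_add _ _) (max_le ha.2 hb.2)⟩
  smul_mem' := fun c q hq => ⟨(dualSpace I).smul_mem c hq.1,
    le_trans (MvPolynomial.totalDegree_smul_le c q) hq.2⟩

namespace TDAux

variable {n : ℕ}

local notation "R" => MvPolynomial (Fin n) ℂ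

lemma degree_eq_sum (α : Fin n →₀ ℕ) : (α.sum fun _ e => e) = α.degree := rfl

lemma totalDegree_le_iff {f : R} {k : ℕ} :
    f.totalDegree ≤ k ↔ ∀ α ∈ f.support, α.degree ≤ k := by
  simp only [MvPolynomial.totalDegree, Finset.sup_le_iff, degree_eq_sum]

/-- truncation to degree ≤ k -/
def trunc (k : ℕ) : R →ₗ[ℂ] R :=
  ∑ i ∈ Finset.range (k + 1), homogeneousComponent i

lemma coeff_trunc (k : ℕ) (f : R) (α : Fin n →₀ ℕ) :
    (trunc k f).coeff α = if α.degree ≤ k then f.coeff α else 0 := by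
  classical
  rw [trunc, LinearMap.sum_apply]
  rw [show ((∑ i ∈ Finset.range (k + 1), homogeneousComponent i f)).coeff α
      = ∑ i ∈ Finset.range (k + 1), (homogeneousComponent i f).coeff α from
    map_sum (MvPolynomial.lcoeff ℂ α) _ _]
  simp only [coeff_homogeneousComponent]
  rw [Finset.sum_ite_eq (Finset.range (k + 1)) α.degree (fun _ => f.coeff α)]
  simp [Nat.lt_succ_iff]

lemma trunc_totalDegree_le (k : ℕ) (f : R) : (trunc k f).totalDegree ≤ k := by
  rw [totalDegree_le_iff]
  intro α hα
  by_contra h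
  exact (MvPolynomial.mem_support_iff.mp hα) (by rw [coeff_trunc, if_neg h])

lemma trunc_of_le {k : ℕ} {f : R} (h : f.totalDegree ≤ k) : trunc k f = f := by
  ext α
  rw [coeff_trunc]
  split_ifs with hα
  · rfl
  · by_contra h'
    have : α ∈ f.support := MvPolynomial.mem_support_iff.mpr fun hc => h' hc.symm
    exact hα (le_trans (le_totalDegree this) h)

lemma apair_comm (q f : R) : apair q f = apair f q := by
  rw [apair_eq_sum (s := q.support ∪ f.support) Finset.subset_union_left,
    apair_eq_sum (s := q.support ∪ f.support) Finset.subset_union_right]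
  exact Finset.sum_congr rfl fun α _ => mul_comm _ _

lemma apair_add_right (q f g : R) : apair q (f + g) = apair q f + apair q g := by
  simp only [apair, MvPolynomial.coeff_add, mul_add, Finset.sum_add_distrib]

lemma apair_smul_right (c : ℂ) (q f : R) : apair q (c • f) = c * apair q f := by
  simp only [apair, MvPolynomial.coeff_smul, smul_eq_mul, Finset.mul_sum]
  exact Finset.sum_congr rfl fun α _ => by ring

lemma apair_monomial_right (q : R) (α : Fin n →₀ ℕ) :
    apair q (monomial α 1) = q.coeff α := by
  classical
  simp only [apair, MvPolynomial.coeff_monomial, mul_ite, mul_one, mul_zero]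
  rw [Finset.sum_ite_eq q.support α (fun β => q.coeff β)]
  split_ifs with h
  · rfl
  · exact (MvPolynomial.notMem_support_iff.mp h).symm

lemma apair_trunc_right {k : ℕ} {q : R} (hq : q.totalDegree ≤ k) (f : R) :
    apair q (trunc k f) = apair q f := by
  refine Finset.sum_congr rfl fun α hα => ?_
  have hd : α.degree ≤ k := le_trans (le_totalDegree hα) hq
  rw [coeff_trunc, if_pos hd]

lemma degree_add (α β : Fin n →₀ ℕ) : (α + β).degree = α.degree + β.degree := by
  simp only [← degree_eq_sum]
  exact Finsupp.sum_add_index' (fun _ => rfl) (fun _ _ _ => rfl)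

/-- the maximal ideal at the origin -/
local notation "MI" => Ideal.span (Set.range (X : Fin n → R))

lemma mem_span_X_deg {g : R} (hg : g ∈ MI) (α : Fin n →₀ ℕ) (hα : α ∈ g.support) :
    1 ≤ α.degree := by
  rw [show (Set.range (X : Fin n → R)) = X '' Set.univ by rw [Set.image_univ]] at hg
  obtain ⟨i, -, hi⟩ := mem_ideal_span_X_image.mp hg α hα
  calc 1 ≤ α i := Nat.one_le_iff_ne_zero.mpr hi
    _ ≤ α.degree := Finsupp.le_degree i α

lemma mem_pow_span_X_iff {m : ℕ} {f : R} :
    f ∈ MI ^ m ↔ ∀ α ∈ f.support, m ≤ α.degree := by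
  classical
  constructor
  · induction m generalizing f with
    | zero => intro _ α _; exact Nat.zero_le _
    | succ m ih =>
      intro hf
      rw [pow_succ] at hf
      refine Submodule.mul_induction_on hf ?_ ?_
      · intro p hp g hg α hα
        obtain ⟨β, hβ, γ, hγ, rfl⟩ := Finset.mem_add.mp (MvPolynomial.support_mul p g hα)
        rw [degree_add]
        exact add_le_add (ih hp β hβ) (mem_span_X_deg hg γ hγ)
      · intro x y hx hy α hα
        rcases Finset.mem_union.mp (Finset.mem_of_subset MvPolynomial.support_add hα) with h | h
        · exact hx α h
        · exact hy α h
  · intro h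
    rw [MvPolynomial.as_sum f]
    refine Submodule.sum_mem _ fun α hα => ?_
    have h1 : (monomial α (f.coeff α) : R) = C (f.coeff α) * monomial α 1 := by
      rw [MvPolynomial.C_mul_monomial, mul_one]
    rw [h1]
    refine Ideal.mul_mem_left _ _ ?_
    rw [← MvPolynomial.prod_X_pow_eq_monomial]
    have h2 : (∏ i ∈ α.support, (X i : R) ^ α i) ∈ ∏ i ∈ α.support,
        (Ideal.span (Set.range (X : Fin n → R))) ^ α i :=
      Ideal.prod_mem_prod fun i _ =>
        Ideal.pow_mem_pow (Ideal.subset_span (Set.mem_range_self i)) _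
    rw [Finset.prod_pow_eq_pow_sum] at h2
    exact Ideal.pow_le_pow_right (h α hα) h2


lemma apair_add_left (a b f : R) : apair (a + b) f = apair a f + apair b f := by
  rw [apair_comm, apair_add_right, apair_comm f a, apair_comm f b]

lemma apair_smul_left (c : ℂ) (a f : R) : apair (c • a) f = c * apair a f := by
  rw [apair_comm, apair_smul_right, apair_comm f a]

variable (n) in
/-- The apolarity pairing as a bilinear form on `V = restrictTotalDegree`. -/
def BW (k : ℕ) : LinearMap.BilinForm ℂ (restrictTotalDegree (Fin n) ℂ k) :=
  LinearMap.mk₂ ℂ (fun q f => apair (q : R) (f : R))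
    (fun a b f => by simp [apair_add_left])
    (fun c a f => by simp [apair_smul_left])
    (fun a b f => by simp [apair_add_right])
    (fun c a f => by simp [apair_smul_right])

lemma BW_apply (k : ℕ) (q f : restrictTotalDegree (Fin n) ℂ k) :
    BW n k q f = apair (q : R) (f : R) := rfl

lemma BW_isRefl (k : ℕ) : (BW n k).IsRefl := by
  intro q f h
  rw [BW_apply, apair_comm]
  exact h

lemma BW_nondegenerate (k : ℕ) : (BW n k).Nondegenerate := by
  refine (LinearMap.IsRefl.nondegenerate_iff_separatingLeft (BW_isRefl k)).mpr ?_
  intro q hq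
  have hqv : (q : R) = 0 := by
    ext α
    by_cases hα : α.degree ≤ k
    · have hm : (monomial α 1 : R) ∈ restrictTotalDegree (Fin n) ℂ k := by
        rw [mem_restrictTotalDegree]
        exact le_trans (totalDegree_monomial_le α 1) hα
      have := hq ⟨monomial α 1, hm⟩
      rw [BW_apply, apair_monomial_right] at this
      simpa using this
    · have hdeg : (q : R).totalDegree ≤ k := (mem_restrictTotalDegree _ _ _).mp q.2
      rw [MvPolynomial.coeff_zero]
      by_contra h'
      exact hα ((totalDegree_le_iff.mp hdeg) α (MvPolynomial.mem_support_iff.mpr h'))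
  exact Subtype.ext hqv

variable (n) in
/-- The image of `I` in `V` under truncation. -/
def Wsub (k : ℕ) (I : Ideal R) : Submodule ℂ (restrictTotalDegree (Fin n) ℂ k) :=
  Submodule.comap (restrictTotalDegree (Fin n) ℂ k).subtype
    (Submodule.map (trunc k) (Submodule.restrictScalars ℂ I))

lemma mem_Wsub {k : ℕ} {I : Ideal R} (v : restrictTotalDegree (Fin n) ℂ k) :
    v ∈ Wsub n k I ↔ ∃ g ∈ I, trunc k g = (v : R) := by
  simp [Wsub, Submodule.mem_comap, Submodule.mem_map]

lemma truncDual_eq (k : ℕ) (I : Ideal R) :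
    truncDual k I = ((BW n k).orthogonal (Wsub n k I)).map
      (restrictTotalDegree (Fin n) ℂ k).subtype := by
  ext q
  simp only [Submodule.mem_map, Submodule.coe_subtype]
  constructor
  · rintro ⟨hdual, hdeg⟩
    refine ⟨⟨q, (mem_restrictTotalDegree _ _ _).mpr hdeg⟩, ?_, rfl⟩
    rw [LinearMap.BilinForm.mem_orthogonal_iff]
    intro w hw
    obtain ⟨g, hg, hgw⟩ := (mem_Wsub w).mp hw
    show BW n k w _ = 0
    rw [BW_apply, apair_comm, ← hgw, apair_trunc_right hdeg]
    exact hdual g hg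
  · rintro ⟨⟨v, hv⟩, horth, rfl⟩
    have hdeg : (v : R).totalDegree ≤ k := (mem_restrictTotalDegree _ _ _).mp hv
    refine ⟨?_, hdeg⟩
    intro f hf
    have hwf : (⟨trunc k f, (mem_restrictTotalDegree _ _ _).mpr (trunc_totalDegree_le k f)⟩ :
        restrictTotalDegree (Fin n) ℂ k) ∈ Wsub n k I := (mem_Wsub _).mpr ⟨f, hf, rfl⟩
    have := (LinearMap.BilinForm.mem_orthogonal_iff.mp horth) _ hwf
    rw [BW_apply, apair_comm, apair_trunc_right hdeg] at this
    exact this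

variable (n) in
/-- the quotient comparison map -/
def theta (k : ℕ) (I : Ideal R) :
    R →ₗ[ℂ] (restrictTotalDegree (Fin n) ℂ k) ⧸ (Wsub n k I) :=
  (Wsub n k I).mkQ ∘ₗ LinearMap.codRestrict (restrictTotalDegree (Fin n) ℂ k) (trunc k)
    (fun f => (mem_restrictTotalDegree _ _ _).mpr (trunc_totalDegree_le k f))

lemma theta_surjective (k : ℕ) (I : Ideal R) : Function.Surjective (theta n k I) := by
  intro x
  obtain ⟨⟨v, hv⟩, rfl⟩ := (Wsub n k I).mkQ_surjective x
  refine ⟨v, ?_⟩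
  simp only [theta, LinearMap.comp_apply]
  congr 1
  exact Subtype.ext (trunc_of_le ((mem_restrictTotalDegree _ _ _).mp hv))

lemma ker_theta (k : ℕ) (I : Ideal R) :
    LinearMap.ker (theta n k I) = Submodule.restrictScalars ℂ (I + MI ^ (k + 1)) := by
  ext f
  simp only [LinearMap.mem_ker, theta, LinearMap.comp_apply, Submodule.mkQ_apply,
    Submodule.Quotient.mk_eq_zero, Submodule.restrictScalars_mem]
  have hmem : (LinearMap.codRestrict (restrictTotalDegree (Fin n) ℂ k) (trunc k)
      (fun f => (mem_restrictTotalDegree _ _ _).mpr (trunc_totalDegree_le k f)) f ∈ Wsub n k I)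
      ↔ ∃ g ∈ I, trunc k g = trunc k f := mem_Wsub _
  rw [hmem]
  constructor
  · rintro ⟨g, hg, hgf⟩
    have hsub : f - g ∈ MI ^ (k + 1) := by
      rw [mem_pow_span_X_iff]
      intro α hα
      by_contra hlt
      have hle : α.degree ≤ k := by omega
      have h1 : (trunc k g).coeff α = (trunc k f).coeff α := by rw [hgf]
      rw [coeff_trunc, coeff_trunc, if_pos hle, if_pos hle] at h1
      have : (f - g).coeff α = 0 := by
        rw [MvPolynomial.coeff_sub, h1, sub_self]
      exact (MvPolynomial.mem_support_iff.mp hα) this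
    rw [Submodule.add_eq_sup, Submodule.mem_sup]
    exact ⟨g, hg, f - g, hsub, by ring⟩
  · intro hf
    rw [Submodule.add_eq_sup, Submodule.mem_sup] at hf
    obtain ⟨g, hg, h, hh, rfl⟩ := hf
    refine ⟨g, hg, ?_⟩
    have hth : trunc k h = 0 := by
      ext α
      rw [coeff_trunc, MvPolynomial.coeff_zero]
      split_ifs with hα
      · by_contra h'
        have := (mem_pow_span_X_iff.mp hh) α (MvPolynomial.mem_support_iff.mpr h')
        omega
      · rfl
    rw [map_add, hth, add_zero]

variable (n) in
def quotEquiv (k : ℕ) (I : Ideal R) :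
    (R ⧸ (I + MI ^ (k + 1))) ≃ₗ[ℂ]
      (restrictTotalDegree (Fin n) ℂ k) ⧸ (Wsub n k I) :=
  (Submodule.Quotient.restrictScalarsEquiv ℂ (I + MI ^ (k + 1))).symm.trans <|
    (Submodule.quotEquivOfEq _ _ (ker_theta k I).symm).trans
      ((theta n k I).quotKerEquivOfSurjective (theta_surjective k I))

end TDAux

/-- `dim_ℂ D_0^k[I] = dim_ℂ R/(I + m₀^{k+1})`, and both are finite. -/
theorem truncDual_finrank_eq (n : ℕ) (I : Ideal (MvPolynomial (Fin n) ℂ)) (k : ℕ) :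
    FiniteDimensional ℂ (truncDual k I) ∧
    FiniteDimensional ℂ (MvPolynomial (Fin n) ℂ ⧸
      (I + (Ideal.span (Set.range (X : Fin n → MvPolynomial (Fin n) ℂ))) ^ (k + 1))) ∧
    Module.finrank ℂ (truncDual k I) =
      Module.finrank ℂ (MvPolynomial (Fin n) ℂ ⧸
        (I + (Ideal.span (Set.range (X : Fin n → MvPolynomial (Fin n) ℂ))) ^ (k + 1))) := by
  classical
  have hD := TDAux.truncDual_eq (n := n) k I
  have e := TDAux.quotEquiv n k I
  have finQ : FiniteDimensional ℂ (MvPolynomial (Fin n) ℂ ⧸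
      (I + (Ideal.span (Set.range (X : Fin n → MvPolynomial (Fin n) ℂ))) ^ (k + 1))) :=
    Module.Finite.equiv e.symm
  have finD : FiniteDimensional ℂ (truncDual k I) := by
    rw [hD]
    exact Module.Finite.equiv
      (Submodule.equivMapOfInjective _ (Submodule.injective_subtype _) _)
  refine ⟨finD, finQ, ?_⟩
  have h1 : Module.finrank ℂ (truncDual k I) =
      Module.finrank ℂ ((TDAux.BW n k).orthogonal (TDAux.Wsub n k I)) := by
    rw [hD]; exact Submodule.finrank_map_subtype_eq _ _
  have h2 := LinearMap.BilinForm.finrank_orthogonal (TDAux.BW_nondegenerate k)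
    (TDAux.Wsub n k I)
  have h3 := Submodule.finrank_quotient_add_finrank (TDAux.Wsub n k I)
  have h4 := e.finrank_eq
  rw [h1, h2, h4]
  omega

end
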